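/- Let A = {(e^t, e^{λt}) : t ∈ ℂ} ⊆ ℂ* × ℂ* where λ ∈ ℂ \ ℝ. Then the closure of A in ℂ² contains the set ({0} × ℂ) ∪ (ℂ × {0}); in particular the closure of A in ℂ² \ {0} contains ({0} × ℂ*) ∪ (ℂ* × {0}). -/

import Mathlib

open Filter Complex Real

private lemma lin_atBot (a d : ℝ) (hd : d < 0) : Tendsto (fun n : ℕ => a + n * d) atTop atBot := by
  apply tendsto_atBot_add_const_left
  exact Tendsto.atTop_mul_const_of_neg hd tendsto_natCast_atTop_atTop

private lemma exp_tendsto_zero {f : ℕ → ℂ} (h : Tendsto (fun n => (f n).re) atTop atBot) :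
    Tendsto (fun n => Complex.exp (f n)) atTop (nhds 0) := by
  rw [tendsto_zero_iff_norm_tendsto_zero]
  simpa only [Function.comp_def, Complex.norm_exp]
    using Real.tendsto_exp_atBot.comp h

private lemma mem_cl (l : ℂ) (t : ℕ → ℂ) (w : ℂ × ℂ)
    (h1 : Tendsto (fun n => Complex.exp (t n)) atTop (nhds w.1))
    (h2 : Tendsto (fun n => Complex.exp (l * t n)) atTop (nhds w.2)) :
    w ∈ closure {p : ℂ × ℂ | ∃ t : ℂ, p = (Complex.exp t, Complex.exp (l * t))} :=
  mem_closure_of_tendsto (h1.prodMk_nhds h2) (Eventually.of_forall fun n => ⟨t n, rfl⟩)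

/-- For `λ ∈ ℂ \ ℝ`, the closure in `ℂ²` of
`A = {(e^t, e^{λt}) : t ∈ ℂ} ⊆ ℂ* × ℂ*` contains `({0} × ℂ) ∪ (ℂ × {0})`;
in particular its closure in `ℂ² \ {0}` contains `({0} × ℂ*) ∪ (ℂ* × {0})`. -/
theorem statement6 (l : ℂ) (hl : l.im ≠ 0) :
    (∀ w : ℂ × ℂ, w.1 = 0 ∨ w.2 = 0 →
      w ∈ closure {p : ℂ × ℂ | ∃ t : ℂ, p = (Complex.exp t, Complex.exp (l * t))}) ∧
    (∀ w : ℂ × ℂ, w ≠ 0 → ((w.1 = 0 ∧ w.2 ≠ 0) ∨ (w.1 ≠ 0 ∧ w.2 = 0)) →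
      w ∈ closure {p : ℂ × ℂ | ∃ t : ℂ, p = (Complex.exp t, Complex.exp (l * t))} ∩
        {z : ℂ × ℂ | z ≠ 0}) := by
  have hl0 : l ≠ 0 := fun h => hl (by simp [h])
  have key : ∀ w : ℂ × ℂ, w.1 = 0 ∨ w.2 = 0 →
      w ∈ closure {p : ℂ × ℂ | ∃ t : ℂ, p = (Complex.exp t, Complex.exp (l * t))} := by
    intro w hw
    by_cases h1 : w.1 = 0 <;> by_cases h2 : w.2 = 0
    · -- both zero : t n = -n * c, c = exp(-(arg l / 2) I)
      set θ := l.arg with hθ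
      have habs : |θ| < π := by
        rcases (Complex.arg_le_pi l).lt_or_eq with h | h
        · exact abs_lt.2 ⟨Complex.neg_pi_lt_arg l, h⟩
        · exact absurd (Complex.arg_eq_pi_iff.1 h).2 hl
      have hcos : 0 < Real.cos (θ / 2) := by
        apply Real.cos_pos_of_mem_Ioo
        constructor <;> [linarith [abs_lt.1 habs |>.1]; linarith [abs_lt.1 habs |>.2]]
      set c : ℂ := Complex.exp ((-(θ / 2) : ℝ) * Complex.I) with hc
      have hcre : c.re = Real.cos (θ / 2) := by
        rw [hc, Complex.exp_ofReal_mul_I_re]; simp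
      have hlc : (l * c).re = ‖l‖ * Real.cos (θ / 2) := by
        have : l * c = (‖l‖ : ℂ) * Complex.exp ((θ / 2 : ℝ) * Complex.I) := by
          conv_lhs => rw [← Complex.norm_mul_exp_arg_mul_I l]
          rw [hc, mul_assoc, ← Complex.exp_add]
          congr 1
          push_cast
          rw [← hθ]
          ring
        rw [this, Complex.re_ofReal_mul, Complex.exp_ofReal_mul_I_re]
      refine mem_cl l (fun n => -(n : ℂ) * c) w ?_ ?_
      · rw [h1]
        apply exp_tendsto_zero
        have : ∀ n : ℕ, ((-(n : ℂ) * c).re) = 0 + (n : ℝ) * (-c.re) := by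
          intro n; simp [Complex.mul_re]; try ring
        simp only [this]
        exact lin_atBot 0 _ (by rw [hcre]; linarith)
      · rw [h2]
        apply exp_tendsto_zero
        have : ∀ n : ℕ, ((l * (-(n : ℂ) * c)).re) = 0 + (n : ℝ) * (-(l * c).re) := by
          intro n
          have : l * (-(n : ℂ) * c) = -(n : ℂ) * (l * c) := by ring
          rw [this]; simp [Complex.mul_re]; try ring
        simp only [this]
        refine lin_atBot 0 _ ?_
        rw [hlc]
        have : 0 < ‖l‖ := norm_pos_iff.mpr hl0
        nlinarith
    · -- w.1 = 0, w.2 ≠ 0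
      set σ : ℤ := if 0 < l.im then -1 else 1 with hσ
      have hσim : (σ : ℝ) * l.im < 0 := by
        rcases lt_or_gt_of_ne hl with h | h
        · simp [hσ, not_lt.2 h.le]; linarith
        · simp [hσ, h]
      set t : ℕ → ℂ := fun n => (Complex.log w.2 + ((σ * n : ℤ) : ℂ) * (2 * π * Complex.I)) / l with ht
      have hlt : ∀ n, l * t n = Complex.log w.2 + ((σ * n : ℤ) : ℂ) * (2 * π * Complex.I) := by
        intro n; rw [ht]; field_simp
      refine mem_cl l t w ?_ ?_
      · rw [h1]
        apply exp_tendsto_zero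
        have hre : ∀ n : ℕ, (t n).re =
            (Complex.log w.2 / l).re + (n : ℝ) * ((σ : ℝ) * (2 * π * l.im) / Complex.normSq l) := by
          intro n
          rw [ht]
          simp only [add_div, Complex.add_re, Complex.div_re]
          push_cast
          simp [Complex.mul_re, Complex.mul_im]
          ring
        simp only [hre]
        apply lin_atBot
        have hns : 0 < Complex.normSq l := Complex.normSq_pos.2 hl0
        have : (σ : ℝ) * (2 * π * l.im) < 0 := by nlinarith [Real.pi_pos]
        exact div_neg_of_neg_of_pos this hns
      · have : ∀ n, Complex.exp (l * t n) = w.2 := by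
          intro n
          rw [hlt, Complex.exp_add, Complex.exp_log h2]
          rw [Complex.exp_int_mul_two_pi_mul_I]
          ring
        simp only [this]
        exact tendsto_const_nhds
    · -- w.1 ≠ 0, w.2 = 0
      set σ : ℤ := if 0 < l.im then 1 else -1 with hσ
      have hσim : 0 < (σ : ℝ) * l.im := by
        rcases lt_or_gt_of_ne hl with h | h
        · simp [hσ, not_lt.2 h.le]; linarith
        · simp [hσ, h]
      set t : ℕ → ℂ := fun n => Complex.log w.1 + ((σ * n : ℤ) : ℂ) * (2 * π * Complex.I) with ht
      refine mem_cl l t w ?_ ?_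
      · have : ∀ n, Complex.exp (t n) = w.1 := by
          intro n
          rw [ht]
          simp only []
          rw [Complex.exp_add, Complex.exp_log h1, Complex.exp_int_mul_two_pi_mul_I]
          ring
        simp only [this]
        exact tendsto_const_nhds
      · rw [h2]
        apply exp_tendsto_zero
        have hre : ∀ n : ℕ, (l * t n).re =
            (l * Complex.log w.1).re + (n : ℝ) * (-((σ : ℝ) * (2 * π * l.im))) := by
          intro n
          rw [ht]
          simp only [mul_add, Complex.add_re]
          push_cast
          simp [Complex.mul_re, Complex.mul_im]
          ring
        simp only [hre]
        apply lin_atBot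
        nlinarith [Real.pi_pos]
    · tauto
  exact ⟨key, fun w hw h => ⟨key w (by tauto), hw⟩⟩
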